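/- Let ν be an infinite regular cardinal with ν^{<ν} = ν. Then Cl_ν and Ns_ν are almost Baire subsets of ν^ν. -/

import Mathlib

universe u

noncomputable section

/-! ## Sequences of ordinals

`SeqLT o v` is the set `v^{<o}` of all sequences of ordinals `< v` of length `< o`
(for `o > 0`; values beyond the length are normalized to `0`).
`SeqFull o v` is the generalized Baire space `v^o` of all functions from ordinals `< o`
to ordinals `< v`. -/

/-- An element of `v^{<o}`: a sequence of ordinals `< v` of length `< o`. -/
structure SeqLT (o v : Ordinal.{u}) : Type (u + 1) where
  len : Ordinal.{u}
  len_lt : len < o ⊔ 1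
  val : Ordinal.{u} → Ordinal.{u}
  val_lt : ∀ β, β < len → val β < v
  val_zero : ∀ β, len ≤ β → val β = 0

namespace SeqLT

variable {o v : Ordinal.{u}}

/-- `s ⊆ t`, i.e. `t` end-extends `s`. -/
protected def le (s t : SeqLT o v) : Prop :=
  s.len ≤ t.len ∧ ∀ β, β < s.len → s.val β = t.val β

/-- `s ⊊ t`, i.e. `t` properly end-extends `s`. -/
protected def slt (s t : SeqLT o v) : Prop :=
  s.le t ∧ s.len < t.len

/-- The empty sequence. -/
protected def empty (o v : Ordinal.{u}) : SeqLT o v where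
  len := 0
  len_lt := lt_sup_iff.mpr (Or.inr zero_lt_one)
  val := fun _ => 0
  val_lt := fun β h => absurd h (not_lt.mpr (zero_le (a := β) : (0 : Ordinal.{u}) ≤ β))
  val_zero := fun _ _ => rfl

/-- `s⌢⟨β⟩`: the sequence `s` extended by the single value `β`. -/
def snoc (s : SeqLT o v) (β : Ordinal.{u}) : SeqLT o v :=
  if h : s.len + 1 < o ⊔ 1 ∧ β < v then
    { len := s.len + 1
      len_lt := h.1
      val := fun γ => if γ = s.len then β else s.val γ
      val_lt := fun γ hγ => by
        rcases eq_or_ne γ s.len with rfl | hne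
        · simpa using h.2
        · simp only [if_neg hne]
          refine s.val_lt γ (lt_of_le_of_ne ?_ hne)
          rw [Ordinal.add_one_eq_succ] at hγ
          exact Order.lt_succ_iff.mp hγ
      val_zero := fun γ hγ => by
        have h1 : s.len < γ :=
          lt_of_lt_of_le (by rw [Ordinal.add_one_eq_succ]; exact Order.lt_succ s.len) hγ
        simp only [if_neg h1.ne']
        exact s.val_zero γ h1.le }
  else s

protected theorem le_refl (s : SeqLT o v) : s.le s :=
  ⟨le_rfl, fun _ _ => rfl⟩

protected theorem le_trans {s t u : SeqLT o v} (h1 : s.le t) (h2 : t.le u) : s.le u :=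
  ⟨h1.1.trans h2.1, fun β hβ => (h1.2 β hβ).trans (h2.2 β (lt_of_lt_of_le hβ h1.1))⟩

end SeqLT

/-- An element of the generalized Baire space `v^o`. -/
structure SeqFull (o v : Ordinal.{u}) : Type (u + 1) where
  val : Ordinal.{u} → Ordinal.{u}
  val_lt : ∀ β, β < o → val β < v
  val_zero : ∀ β, o ≤ β → val β = 0

/-- The restriction `x ↾ β` of `x : v^o` to an ordinal `β < o`. -/
def SeqFull.res {o v : Ordinal.{u}} (x : SeqFull o v) (β : Ordinal.{u}) : SeqLT o v :=
  if h : β < o ⊔ 1 then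
    { len := β
      len_lt := h
      val := fun γ => if γ < β then x.val γ else 0
      val_lt := fun γ hγ => by
        simp only [if_pos hγ]
        rcases lt_sup_iff.mp h with h' | h'
        · exact x.val_lt γ (hγ.trans h')
        · rw [Ordinal.lt_one_iff_zero] at h'
          exact absurd (h' ▸ hγ) (not_lt.mpr (zero_le (a := γ) : (0 : Ordinal.{u}) ≤ γ))
      val_zero := fun γ hγ => if_neg (not_lt.mpr hγ) }
  else SeqLT.empty o v

/-- `s ⊆ x`: the sequence `s` is an initial segment of `x : v^o`. -/
def SeqLT.prefixOf {o v : Ordinal.{u}} (s : SeqLT o v) (x : SeqFull o v) : Prop :=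
  ∀ β, β < s.len → s.val β = x.val β

/-! ## The bounded topology -/

/-- The basic open set `N_t`. -/
def basicOpen {o v : Ordinal.{u}} (t : SeqLT o v) : Set (SeqFull o v) :=
  {x | t.prefixOf x}

/-- The bounded (standard) topology on the generalized Baire space, generated by the
basic open sets `N_t`. -/
instance (o v : Ordinal.{u}) : TopologicalSpace (SeqFull o v) :=
  TopologicalSpace.generateFrom {U | ∃ t : SeqLT o v, U = basicOpen t}

/-- `A` is a nowhere dense subset of `B` (in the subspace topology on `B`). -/
def NowhereDenseIn {o v : Ordinal.{u}} (A B : Set (SeqFull o v)) : Prop :=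
  A ⊆ B ∧ interior (closure {x : ↥B | (x : SeqFull o v) ∈ A}) = ∅

/-- `A` is `o`-meager in `B`: `A ∩ B` is the union of (card of) `o` many nowhere dense
subsets of `B`. -/
def MeagerIn {o v : Ordinal.{u}} (A B : Set (SeqFull o v)) : Prop :=
  ∃ F : {β : Ordinal.{u} // β < o} → Set (SeqFull o v),
    (∀ i, NowhereDenseIn (F i) B) ∧ A ∩ B = ⋃ i, F i

/-- `A` is comeager in `B`: `B \ A` is meager in `B`. -/
def ComeagerIn {o v : Ordinal.{u}} (A B : Set (SeqFull o v)) : Prop :=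
  MeagerIn (B \ A) B

/-- `A` has the `o`-Baire property: for some open `U`, `A △ U` is meager. -/
def BaireSet {o v : Ordinal.{u}} (A : Set (SeqFull o v)) : Prop :=
  ∃ U : Set (SeqFull o v), IsOpen U ∧ MeagerIn (symmDiff A U) Set.univ

/-! ## Homomorphisms of `v^{<o}` -/

/-- A homomorphism: strictly extension-preserving map of `v^{<o}` to itself. -/
def IsHom {o v : Ordinal.{u}} (f : SeqLT o v → SeqLT o v) : Prop :=
  ∀ s t : SeqLT o v, s.slt t → (f s).slt (f t)

/-- `f` is dense: for every `s` and every `t ⊇ f(s)` there is `β < v` with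
`f(s⌢⟨β⟩) ⊇ t`. -/
def IsDenseMap {o v : Ordinal.{u}} (f : SeqLT o v → SeqLT o v) : Prop :=
  ∀ s t : SeqLT o v, (f s).le t → ∃ β, β < v ∧ t.le (f (s.snoc β))

/-- `u = ⋃_{α<γ} s α` for a chain `s`. -/
def IsUnionOfChain {o v : Ordinal.{u}} (u : SeqLT o v) (γ : Ordinal.{u})
    (s : Ordinal.{u} → SeqLT o v) : Prop :=
  (∀ α, α < γ → (s α).le u) ∧ ∀ β, β < u.len → ∃ α, α < γ ∧ β < (s α).len

/-- `f` is continuous: for every limit `γ < o` and every strictly increasing sequence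
`⟨s_α : α < γ⟩`, `f(⋃_{α<γ} s_α) = ⋃_{α<γ} f(s_α)`. -/
def IsContinuousMap {o v : Ordinal.{u}} (f : SeqLT o v → SeqLT o v) : Prop :=
  ∀ γ : Ordinal.{u}, Order.IsSuccLimit γ → γ < o →
    ∀ s : Ordinal.{u} → SeqLT o v, (∀ α β, α < β → β < γ → (s α).slt (s β)) →
      ∀ u : SeqLT o v, IsUnionOfChain u γ s → IsUnionOfChain (f u) γ fun α => f (s α)

/-- `y = f*(x) = ⋃_{α<o} f(x↾α)` for a homomorphism `f`. -/
def FStarVal {o v : Ordinal.{u}} (f : SeqLT o v → SeqLT o v) (x y : SeqFull o v) : Prop :=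
  (∀ α, α < o → (f (x.res α)).prefixOf y) ∧
    ∀ β, β < o → ∃ α, α < o ∧ β < (f (x.res α)).len

/-! ## Clubs and the almost Baire property -/

/-- `C` is a club (closed unbounded set) in the ordinal `o`. -/
def IsClubIn (C : Set Ordinal.{u}) (o : Ordinal.{u}) : Prop :=
  (∀ γ ∈ C, γ < o) ∧ (∀ β, β < o → ∃ γ ∈ C, β ≤ γ) ∧
    ∀ β, β < o → 0 < β → (∀ γ, γ < β → ∃ ξ ∈ C, γ < ξ ∧ ξ < β) → β ∈ C

/-- The set of functions coding elements of the club filter as characteristic functions. -/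
def ClSet (o v : Ordinal.{u}) : Set (SeqFull o v) :=
  {x | ∃ C : Set Ordinal.{u}, IsClubIn C o ∧ ∀ i ∈ C, x.val i ≠ 0}

/-- The set of functions coding elements of the nonstationary ideal. -/
def NsSet (o v : Ordinal.{u}) : Set (SeqFull o v) :=
  {x | ∃ C : Set Ordinal.{u}, IsClubIn C o ∧ ∀ i ∈ C, x.val i = 0}

/-- `A` is almost Baire: there is a dense homomorphism `f` with `ran f* ⊆ A`, or a dense
continuous homomorphism `f` with `f ∅ = ∅` and `ran f* ⊆ Aᶜ`. -/
def AlmostBaire {o v : Ordinal.{u}} (A : Set (SeqFull o v)) : Prop :=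
  ∃ f : SeqLT o v → SeqLT o v, IsHom f ∧ IsDenseMap f ∧
    ((∀ x y, FStarVal f x y → y ∈ A) ∨
      ((∀ x y, FStarVal f x y → y ∉ A) ∧ IsContinuousMap f ∧
        f (SeqLT.empty o v) = SeqLT.empty o v))

/-! ## Banach–Mazur games of length `o`

A run of the game is a strictly increasing sequence `⟨s_α : α < o⟩` in `v^{<o}`;
player I plays at even positions (`0` and limits count as even), player II at odd ones.
In the game `G^t` the first move of player I must extend `t`; taking `t = ∅` gives the
plain Banach–Mazur game. -/

/-- `γ` is an even ordinal (`0` and limits are even). -/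
def EvenOrd (γ : Ordinal.{u}) : Prop := ∃ δ : Ordinal.{u}, γ = 2 * δ

/-- `γ` is an odd ordinal. -/
def OddOrd (γ : Ordinal.{u}) : Prop := ∃ δ : Ordinal.{u}, γ = 2 * δ + 1

/-- The moves of a (partial) run, as a function on ordinals. -/
abbrev Play (o v : Ordinal.{u}) := Ordinal.{u} → SeqLT o v

/-- A strategy: given the length of the current position and the moves so far,
produce the next move. -/
abbrev Strat (o v : Ordinal.{u}) := Ordinal.{u} → Play o v → SeqLT o v

/-- `p` is a legal partial run of length `γ` of the game `G^t`: strictly increasing moves,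
the first move extends `t`, and the moves beyond `γ` are normalized to `∅`. -/
def IsPos {o v : Ordinal.{u}} (t : SeqLT o v) (p : Play o v) (γ : Ordinal.{u}) : Prop :=
  (∀ α β, α < β → β < γ → (p α).slt (p β)) ∧ (0 < γ → t.le (p 0)) ∧
    ∀ α, γ ≤ α → p α = SeqLT.empty o v

/-- The restriction of a run to its first `γ` moves. -/
def resPlay {o v : Ordinal.{u}} (p : Play o v) (γ : Ordinal.{u}) : Play o v :=
  fun α => if α < γ then p α else SeqLT.empty o v

/-- `m` is a legal move at the position `p` of length `γ` in the game `G^t`. -/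
def MoveOK {o v : Ordinal.{u}} (t : SeqLT o v) (p : Play o v) (γ : Ordinal.{u})
    (m : SeqLT o v) : Prop :=
  (∀ α, α < γ → (p α).slt m) ∧ (γ = 0 → t.le m)

/-- `σ` is a strategy for player I in `G^t`: it assigns a legal move to every legal
position of even length. -/
def LegalI {o v : Ordinal.{u}} (t : SeqLT o v) (σ : Strat o v) : Prop :=
  ∀ γ, γ < o → EvenOrd γ → ∀ p, IsPos t p γ → MoveOK t p γ (σ γ p)

/-- `σ` is a strategy for player II in `G^t`: it assigns a legal move to every legal
position of odd length. -/
def LegalII {o v : Ordinal.{u}} (t : SeqLT o v) (σ : Strat o v) : Prop :=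
  ∀ γ, γ < o → OddOrd γ → ∀ p, IsPos t p γ → MoveOK t p γ (σ γ p)

/-- The first `γ` moves of `p` follow the strategy `σ` of player I. -/
def FollowsI {o v : Ordinal.{u}} (σ : Strat o v) (p : Play o v) (γ : Ordinal.{u}) : Prop :=
  ∀ α, α < γ → EvenOrd α → p α = σ α (resPlay p α)

/-- The first `γ` moves of `p` follow the strategy `σ` of player II. -/
def FollowsII {o v : Ordinal.{u}} (σ : Strat o v) (p : Play o v) (γ : Ordinal.{u}) : Prop :=
  ∀ α, α < γ → OddOrd α → p α = σ α (resPlay p α)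

/-- `x = ⋃_{α<o} p α` is the outcome of the complete run `p`. -/
def IsOutcome {o v : Ordinal.{u}} (p : Play o v) (x : SeqFull o v) : Prop :=
  (∀ α, α < o → (p α).prefixOf x) ∧ ∀ β, β < o → ∃ α, α < o ∧ β < (p α).len

/-- Player I has a winning strategy in the Banach–Mazur game `G^t(A)` of length `o`. -/
def WinIStrat {o v : Ordinal.{u}} (t : SeqLT o v) (A : Set (SeqFull o v)) : Prop :=
  ∃ σ : Strat o v, LegalI t σ ∧
    ∀ p : Play o v, IsPos t p o → FollowsI σ p o → ∃ x, IsOutcome p x ∧ x ∈ A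

/-- Player II has a winning strategy in the Banach–Mazur game `G^t(A)` of length `o`. -/
def WinIIStrat {o v : Ordinal.{u}} (t : SeqLT o v) (A : Set (SeqFull o v)) : Prop :=
  ∃ σ : Strat o v, LegalII t σ ∧
    ∀ p : Play o v, IsPos t p o → FollowsII σ p o → ∃ x, IsOutcome p x ∧ x ∉ A

/-- `σ` is a tactic for player II: its moves depend only on the union of the previous moves. -/
def IsTacticII {o v : Ordinal.{u}} (t : SeqLT o v) (σ : Strat o v) : Prop :=
  ∃ f : SeqLT o v → SeqLT o v, ∀ γ, γ < o → OddOrd γ → ∀ p, IsPos t p γ →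
    ∀ u, IsUnionOfChain u γ p → σ γ p = f u

/-- Player II has a winning tactic in the Banach–Mazur game `G^t(A)` of length `o`. -/
def WinIITactic {o v : Ordinal.{u}} (t : SeqLT o v) (A : Set (SeqFull o v)) : Prop :=
  ∃ σ : Strat o v, LegalII t σ ∧ IsTacticII t σ ∧
    ∀ p : Play o v, IsPos t p o → FollowsII σ p o → ∃ x, IsOutcome p x ∧ x ∉ A

/-! ## Trees and perfect sets -/

/-- A subtree of `v^{<o}`: a downwards closed set of sequences. -/
def IsSubtree {o v : Ordinal.{u}} (T : Set (SeqLT o v)) : Prop :=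
  ∀ s ∈ T, ∀ r : SeqLT o v, r.le s → r ∈ T

/-- `T` is closed: every strictly increasing sequence in `T` of length `< o` has an
upper bound in `T`. -/
def TreeClosed {o v : Ordinal.{u}} (T : Set (SeqLT o v)) : Prop :=
  ∀ γ : Ordinal.{u}, γ < o → ∀ s : Ordinal.{u} → SeqLT o v,
    (∀ α β, α < β → β < γ → (s α).slt (s β)) → (∀ α, α < γ → s α ∈ T) →
      ∃ b ∈ T, ∀ α, α < γ → (s α).le b

/-- `t` is a direct successor of `s`. -/
def IsDirectSucc {o v : Ordinal.{u}} (s t : SeqLT o v) : Prop :=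
  s.slt t ∧ t.len = s.len + 1

/-- `T` is a perfect tree: a (nonempty) closed subtree whose splitting nodes are cofinal. -/
def IsPerfectTree {o v : Ordinal.{u}} (T : Set (SeqLT o v)) : Prop :=
  T.Nonempty ∧ IsSubtree T ∧ TreeClosed T ∧
    ∀ s ∈ T, ∃ t ∈ T, s.le t ∧
      ∃ t₁ ∈ T, ∃ t₂ ∈ T, IsDirectSucc t t₁ ∧ IsDirectSucc t t₂ ∧ t₁ ≠ t₂

/-- The body `[T]` of a tree `T`: the set of branches of length `o` through `T`. -/
def treeBody {o v : Ordinal.{u}} (T : Set (SeqLT o v)) : Set (SeqFull o v) :=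
  {x | ∀ α, α < o → x.res α ∈ T}

/-! ## Auxiliary development -/

namespace AlmostBaireAux

open Ordinal

attribute [local instance] Classical.propDecidable

variable {o v : Ordinal.{u}}

theorem SeqLT.ext' {s t : SeqLT o v} (h1 : s.len = t.len)
    (h2 : ∀ β, s.val β = t.val β) : s = t := by
  cases s; cases t
  simp only at h1 h2
  subst h1
  have : ∀ {f g : Ordinal.{u} → Ordinal.{u}}, (∀ β, f β = g β) → f = g := fun h => funext h
  cases this h2
  rfl

theorem slt_trans {s t u : SeqLT o v} (h1 : s.slt t) (h2 : t.le u) : s.slt u :=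
  ⟨SeqLT.le_trans h1.1 h2, lt_of_lt_of_le h1.2 h2.1⟩

theorem le_slt_trans {s t u : SeqLT o v} (h1 : s.le t) (h2 : t.slt u) : s.slt u :=
  ⟨SeqLT.le_trans h1 h2.1, lt_of_le_of_lt h1.1 h2.2⟩

/-- `cover s t = t` if `t` extends `s`, else `s`. -/
def cover (s t : SeqLT o v) : SeqLT o v := if s.le t then t else s

theorem le_cover (s t : SeqLT o v) : s.le (cover s t) := by
  unfold cover; split
  · assumption
  · exact s.le_refl

theorem cover_eq {s t : SeqLT o v} (h : s.le t) : cover s t = t := if_pos h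

section snoc

variable {s : SeqLT o v} {c : Ordinal.{u}} (h1 : s.len + 1 < o ⊔ 1) (h2 : c < v)
include h1 h2

theorem snoc_len : (s.snoc c).len = s.len + 1 := by
  unfold SeqLT.snoc; rw [dif_pos ⟨h1, h2⟩]

theorem snoc_val_self : (s.snoc c).val s.len = c := by
  unfold SeqLT.snoc; rw [dif_pos ⟨h1, h2⟩]; simp

theorem snoc_val_of_ne {β : Ordinal.{u}} (h : β ≠ s.len) : (s.snoc c).val β = s.val β := by
  unfold SeqLT.snoc; rw [dif_pos ⟨h1, h2⟩]; simp [h]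

theorem le_snoc : s.le (s.snoc c) := by
  refine ⟨by rw [snoc_len h1 h2]; exact le_self_add, fun β hβ => ?_⟩
  rw [snoc_val_of_ne h1 h2 hβ.ne]

theorem slt_snoc : s.slt (s.snoc c) := by
  refine ⟨le_snoc h1 h2, ?_⟩
  rw [snoc_len h1 h2, Ordinal.add_one_eq_succ]
  exact Order.lt_succ _

end snoc

/-! ### Unions of chains -/

/-- The union of the chain `⟨u α : α < lam⟩` (given a proof that the sup of the lengths
is small enough). -/
def chainSup (lam : Ordinal.{u}) (u : Ordinal.{u} → SeqLT o v)
    (hlen : Ordinal.bsup.{u, u} lam (fun a _ => (u a).len) < o ⊔ 1) : SeqLT o v where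
  len := Ordinal.bsup.{u, u} lam fun a _ => (u a).len
  len_lt := hlen
  val := fun β => if h : ∃ a, a < lam ∧ β < (u a).len then (u h.choose).val β else 0
  val_lt := fun β hβ => by
    obtain ⟨a, ha, hb⟩ := (Ordinal.lt_bsup (fun a _ => (u a).len)).mp hβ
    show dite _ _ _ < _
    rw [dif_pos ⟨a, ha, hb⟩]
    exact (u _).val_lt β (⟨a, ha, hb⟩ : ∃ a, a < lam ∧ β < (u a).len).choose_spec.2
  val_zero := fun β hβ => by
    show dite _ _ _ = _
    rw [dif_neg]
    rintro ⟨a, ha, hb⟩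
    exact absurd (lt_of_lt_of_le hb (Ordinal.le_bsup (fun a _ => (u a).len) a ha)) (not_lt.mpr hβ)

theorem chainSup_len {lam : Ordinal.{u}} {u : Ordinal.{u} → SeqLT o v} (hlen) :
    (chainSup lam u hlen).len = Ordinal.bsup.{u, u} lam fun a _ => (u a).len := rfl

theorem chainSup_val {lam : Ordinal.{u}} {u : Ordinal.{u} → SeqLT o v} (hlen)
    (hch : ∀ a b, a ≤ b → b < lam → (u a).le (u b)) {a β : Ordinal.{u}}
    (ha : a < lam) (hβ : β < (u a).len) :
    (chainSup lam u hlen).val β = (u a).val β := by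
  have hex : ∃ a, a < lam ∧ β < (u a).len := ⟨a, ha, hβ⟩
  show dite _ _ _ = _
  rw [dif_pos hex]
  obtain ⟨hb1, hb2⟩ := hex.choose_spec
  rcases le_total a hex.choose with h | h
  · exact ((hch a _ h hb1).2 β hβ).symm
  · exact (hch _ a h ha).2 β hb2

theorem le_chainSup {lam : Ordinal.{u}} {u : Ordinal.{u} → SeqLT o v} (hlen)
    (hch : ∀ a b, a ≤ b → b < lam → (u a).le (u b)) {a : Ordinal.{u}} (ha : a < lam) :
    (u a).le (chainSup lam u hlen) :=
  ⟨Ordinal.le_bsup _ a ha, fun β hβ => (chainSup_val hlen hch ha hβ).symm⟩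

/-- `chainSup` with the smallness condition as an `if`. -/
def chainSup' (lam : Ordinal.{u}) (u : Ordinal.{u} → SeqLT o v) : SeqLT o v :=
  if hlen : Ordinal.bsup.{u, u} lam (fun a _ => (u a).len) < o ⊔ 1 then
    chainSup lam u hlen
  else SeqLT.empty o v

theorem chainSup'_eq {lam : Ordinal.{u}} {u : Ordinal.{u} → SeqLT o v}
    (hlen : Ordinal.bsup.{u, u} lam (fun a _ => (u a).len) < o ⊔ 1) :
    chainSup' lam u = chainSup lam u hlen := dif_pos hlen
/-! ### The dense homomorphism -/

section FAux

variable (ho : Order.IsSuccLimit o)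
variable (hbs : ∀ (lam : Ordinal.{u}) (f : ∀ a < lam, Ordinal.{u}), lam < o →
  (∀ a ha, f a ha < o) → Ordinal.bsup.{u, u} lam f < o)
variable (g : Ordinal.{u} → SeqLT o v) (c : Ordinal.{u}) (hc : c < v)

include ho in
theorem ho1 : o ⊔ 1 = o :=
  sup_eq_left.mpr (Order.one_le_iff_pos.mpr ho.pos)

include ho in
theorem llt (s : SeqLT o v) : s.len < o := lt_of_lt_of_le s.len_lt (le_of_eq (ho1 ho))

include ho in
theorem lltsup (s : SeqLT o v) : s.len + 1 < o ⊔ 1 := by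
  rw [ho1 ho, Ordinal.add_one_eq_succ]
  exact ho.succ_lt (llt ho s)

include ho hbs in
theorem bsup_len_lt {lam : Ordinal.{u}} (u : Ordinal.{u} → SeqLT o v) (hl : lam < o) :
    Ordinal.bsup.{u, u} lam (fun a _ => (u a).len) < o ⊔ 1 := by
  rw [ho1 ho]
  exact hbs lam _ hl fun a _ => llt ho (u a)

/-- The dense homomorphism, as a function of `s.val` and a stage `α ≤ s.len`. -/
def fAux (w : Ordinal.{u} → Ordinal.{u}) (α : Ordinal.{u}) : SeqLT o v :=
  Ordinal.limitRecOn α (SeqLT.empty o v)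
    (fun γ ih => (cover ih (g (w γ))).snoc c)
    (fun lam _ ih =>
      (chainSup' lam fun β => if hb : β < lam then ih β hb else SeqLT.empty o v).snoc c)

theorem fAux_zero (w) : fAux g c w 0 = SeqLT.empty o v := by
  simp only [fAux]; rw [Ordinal.limitRecOn_zero]

theorem fAux_succ (w γ) :
    fAux g c w (γ + 1) = (cover (fAux g c w γ) (g (w γ))).snoc c := by
  simp only [fAux]; rw [Ordinal.add_one_eq_succ, Ordinal.limitRecOn_succ]

theorem fAux_limit (w) {lam : Ordinal.{u}} (h : Order.IsSuccLimit lam) :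
    fAux g c w lam =
      (chainSup' lam fun β => if hb : β < lam then fAux g c w β else SeqLT.empty o v).snoc c := by
  simp only [fAux]; rw [Ordinal.limitRecOn_limit _ _ _ _ h]

theorem fAux_congr {w w' : Ordinal.{u} → Ordinal.{u}} :
    ∀ α : Ordinal.{u}, (∀ β < α, w β = w' β) → fAux g c w α = fAux g c w' α := by
  intro α
  induction α using Ordinal.induction with
  | _ j IH =>
    intro hw
    rcases Ordinal.zero_or_succ_or_isSuccLimit j with rfl | ⟨a, rfl⟩ | hj
    · rw [fAux_zero, fAux_zero]
    · rw [← Ordinal.add_one_eq_succ, fAux_succ, fAux_succ,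
        IH a (by rw [← Ordinal.add_one_eq_succ]; exact lt_add_one  a)
          (fun β hβ => hw β (hβ.trans (by rw [← Ordinal.add_one_eq_succ]; exact lt_add_one a))),
        hw a (by rw [← Ordinal.add_one_eq_succ]; exact lt_add_one a)]
    · rw [fAux_limit g c w hj, fAux_limit g c w' hj]
      congr 1
      congr 1
      funext β
      split
      · next hb => exact IH β hb fun β' hβ' => hw β' (hβ'.trans hb)
      · rfl

include ho hbs hc in
theorem fAux_slt (w : Ordinal.{u} → Ordinal.{u}) :
    ∀ b : Ordinal.{u}, b < o → ∀ a < b, (fAux g c w a).slt (fAux g c w b) := by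
  intro b
  induction b using Ordinal.induction with
  | _ j IH =>
    intro hj a ha
    rcases Ordinal.zero_or_succ_or_isSuccLimit j with rfl | ⟨b', rfl⟩ | hlim
    · exact absurd ha (not_lt.mpr (zero_le (a := a) : (0 : Ordinal.{u}) ≤ a))
    · rw [← Ordinal.add_one_eq_succ] at hj ⊢
      rw [fAux_succ]
      have hstep : (fAux g c w b').slt ((cover (fAux g c w b') (g (w b'))).snoc c) :=
        le_slt_trans (le_cover _ _) (slt_snoc (lltsup ho _) hc)
      have hb' : b' < b' + 1 := lt_add_one b'
      rcases (Order.lt_succ_iff.mp ha).lt_or_eq with h | rfl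
      · exact slt_trans (IH b' hb' (hb'.trans hj) a h) hstep.1
      · exact hstep
    · rw [fAux_limit g c w hlim]
      set u := fun β => if hb : β < j then fAux g c w β else SeqLT.empty o v with hu
      have hcond := bsup_len_lt ho hbs u hj
      have hch : ∀ a b, a ≤ b → b < j → (u a).le (u b) := by
        intro a b hab hbj
        rcases hab.lt_or_eq with h | rfl
        · rw [hu]; simp only [dif_pos (h.trans hbj), dif_pos hbj]
          exact (IH b hbj (hbj.trans hj) a h).1
        · exact SeqLT.le_refl _
      have h1 : (fAux g c w a).le (chainSup' j u) := by
        rw [chainSup'_eq hcond]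
        have h2 : u a = fAux g c w a := dif_pos ha
        rw [← h2]
        exact le_chainSup hcond hch ha
      exact le_slt_trans h1 (slt_snoc (lltsup ho _) hc)

end FAux
section FHom

variable (ho : Order.IsSuccLimit o)
variable (hbs : ∀ (lam : Ordinal.{u}) (f : ∀ a < lam, Ordinal.{u}), lam < o →
  (∀ a ha, f a ha < o) → Ordinal.bsup.{u, u} lam f < o)
variable (g : Ordinal.{u} → SeqLT o v) (c : Ordinal.{u}) (hc : c < v)
variable (hg : ∀ t : SeqLT o v, ∃ β, β < v ∧ g β = t)

/-- The dense homomorphism. -/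
def fHom : SeqLT o v → SeqLT o v := fun s => fAux g c s.val s.len

include ho hbs hc in
theorem fHom_isHom : IsHom (fHom g c) := by
  intro s t hst
  show (fAux g c s.val s.len).slt (fAux g c t.val t.len)
  rw [fAux_congr g c s.len fun β hβ => hst.1.2 β hβ]
  exact fAux_slt ho hbs g c hc t.val t.len (llt ho t) s.len hst.2

include ho hbs hc hg in
theorem fHom_isDense : IsDenseMap (fHom g c) := by
  intro s t hts
  obtain ⟨β, hβv, rfl⟩ := hg t
  refine ⟨β, hβv, ?_⟩
  have h1 : s.len + 1 < o ⊔ 1 := lltsup ho s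
  have hlen : (s.snoc β).len = s.len + 1 := snoc_len h1 hβv
  show (g β).le (fAux g c (s.snoc β).val (s.snoc β).len)
  rw [hlen, fAux_succ,
    fAux_congr g c s.len fun γ hγ => snoc_val_of_ne h1 hβv hγ.ne,
    snoc_val_self h1 hβv,
    cover_eq (show (fAux g c s.val s.len).le (g β) from hts)]
  exact le_snoc (lltsup ho _) hc

end FHom
section Club

variable (ho : Order.IsSuccLimit o)
variable (hbs : ∀ (lam : Ordinal.{u}) (f : ∀ a < lam, Ordinal.{u}), lam < o →
  (∀ a ha, f a ha < o) → Ordinal.bsup.{u, u} lam f < o)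
variable (g : Ordinal.{u} → SeqLT o v) (c : Ordinal.{u}) (hc : c < v)

theorem succ_cancel {a b : Ordinal.{u}} (h : a + 1 = b + 1) : a = b := by
  rw [Ordinal.add_one_eq_succ, Ordinal.add_one_eq_succ] at h
  exact Order.succ_eq_succ_iff.mp h

theorem res_len (x : SeqFull o v) {a : Ordinal.{u}} (ha : a < o ⊔ 1) : (x.res a).len = a := by
  unfold SeqFull.res; rw [dif_pos ha]

theorem res_val_lt (x : SeqFull o v) {a : Ordinal.{u}} (ha : a < o ⊔ 1) {β : Ordinal.{u}}
    (hβ : β < a) : (x.res a).val β = x.val β := by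
  unfold SeqFull.res; rw [dif_pos ha]; exact if_pos hβ

theorem fHom_res (x : SeqFull o v) {a : Ordinal.{u}} (ha : a < o) :
    fHom g c (x.res a) = fAux g c x.val a := by
  have ha' : a < o ⊔ 1 := lt_of_lt_of_le ha le_sup_left
  show fAux g c (x.res a).val (x.res a).len = _
  rw [res_len x ha']
  exact fAux_congr g c a fun β hβ => res_val_lt x ha' hβ

include ho hbs hc in
theorem fAux_len_le (w : Ordinal.{u} → Ordinal.{u}) {a b : Ordinal.{u}} (hab : a ≤ b)
    (hb : b < o) : (fAux g c w a).len ≤ (fAux g c w b).len := by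
  rcases hab.lt_or_eq with h | rfl
  · exact (fAux_slt ho hbs g c hc w b hb a h).2.le
  · exact le_rfl

theorem fAux_len_zero (w : Ordinal.{u} → Ordinal.{u}) : (fAux g c w 0).len = 0 := by
  rw [fAux_zero]; rfl

include ho hc in
theorem fAux_marker (w : Ordinal.{u} → Ordinal.{u}) {a : Ordinal.{u}} (ha0 : a ≠ 0)
    (hao : a < o) : ∃ m, (fAux g c w a).len = m + 1 ∧ (fAux g c w a).val m = c := by
  rcases Ordinal.zero_or_succ_or_isSuccLimit a with rfl | ⟨b, rfl⟩ | hlim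
  · exact absurd rfl ha0
  · rw [← Ordinal.add_one_eq_succ, fAux_succ]
    exact ⟨_, snoc_len (lltsup ho _) hc, snoc_val_self (lltsup ho _) hc⟩
  · rw [fAux_limit g c w hlim]
    exact ⟨_, snoc_len (lltsup ho _) hc, snoc_val_self (lltsup ho _) hc⟩

include ho hbs hc in
theorem fAux_limit_len (w : Ordinal.{u} → Ordinal.{u}) {lam : Ordinal.{u}}
    (hlim : Order.IsSuccLimit lam) (hlam : lam < o) :
    (fAux g c w lam).len =
      Ordinal.bsup.{u, u} lam (fun a _ => (fAux g c w a).len) + 1 := by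
  have hkey : (fun a (_ : a < lam) =>
      ((if hb : a < lam then fAux g c w a else SeqLT.empty o v)).len) =
      fun a (_ : a < lam) => (fAux g c w a).len := by
    funext a ha; rw [dif_pos ha]
  rw [fAux_limit g c w hlim, snoc_len (lltsup ho _) hc,
    chainSup'_eq (bsup_len_lt ho hbs _ hlam), chainSup_len, hkey]

include ho hbs hc in
theorem club_main (x y : SeqFull o v)
    (h1 : ∀ a, a < o → (fAux g c x.val a).prefixOf y)
    (h2 : ∀ β, β < o → ∃ a, a < o ∧ β < (fAux g c x.val a).len) :
    ∃ C : Set Ordinal.{u}, IsClubIn C o ∧ ∀ i ∈ C, y.val i = c := by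
  refine ⟨{i | ∃ a, a < o ∧ (fAux g c x.val a).len = i + 1}, ⟨?_, ?_, ?_⟩, ?_⟩
  · -- bounded by o
    rintro γ ⟨a, hao, hlen⟩
    calc γ < γ + 1 := lt_add_one γ
    _ = (fAux g c x.val a).len := hlen.symm
    _ < o := llt ho _
  · -- unbounded
    intro β hβ
    obtain ⟨a, hao, hβlen⟩ := h2 β hβ
    have ha0 : a ≠ 0 := by
      rintro rfl
      rw [fAux_len_zero] at hβlen
      exact (not_lt.mpr (zero_le (a := β) : (0 : Ordinal.{u}) ≤ β)) hβlen
    obtain ⟨m, hm1, _⟩ := fAux_marker ho g c hc x.val ha0 hao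
    refine ⟨m, ⟨a, hao, hm1⟩, ?_⟩
    rw [hm1, Ordinal.add_one_eq_succ] at hβlen
    exact Order.lt_succ_iff.mp hβlen
  · -- closed
    intro β hβo hβpos hcl
    have hβlim : Order.IsSuccLimit β := by
      rcases Ordinal.zero_or_succ_or_isSuccLimit β with rfl | ⟨δ, rfl⟩ | h
      · exact absurd hβpos (lt_irrefl 0)
      · obtain ⟨ξ, _, hξ2, hξ3⟩ := hcl δ (Order.lt_succ δ)
        exact absurd hξ2 (not_lt.mpr (Order.lt_succ_iff.mp hξ3))
      · exact h
    obtain ⟨a0, ha0o, ha0S⟩ := h2 β hβo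
    have hSne : Set.Nonempty {a : Ordinal.{u} | β < (fAux g c x.val a).len} := ⟨a0, ha0S⟩
    have hlamS : β < (fAux g c x.val (sInf {a : Ordinal.{u} |
        β < (fAux g c x.val a).len})).len := csInf_mem hSne
    set lam := sInf {a : Ordinal.{u} | β < (fAux g c x.val a).len} with hlamdef
    have hlam_le : ∀ a, β < (fAux g c x.val a).len → lam ≤ a := fun a ha => csInf_le' ha
    have hlamo : lam < o := lt_of_le_of_lt (hlam_le a0 ha0S) ha0o
    have hmin : ∀ a, a < lam → (fAux g c x.val a).len ≤ β := fun a ha =>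
      not_lt.mp fun hlt => absurd (hlam_le a hlt) (not_le.mpr ha)
    rcases Ordinal.zero_or_succ_or_isSuccLimit lam with hlam0 | ⟨b, hlamb⟩ | hlamlim
    · rw [hlam0, fAux_len_zero] at hlamS
      exact absurd hlamS (not_lt.mpr (zero_le (a := β) : (0 : Ordinal.{u}) ≤ β))
    · -- lam = succ b
      have hblam : b < lam := by rw [← hlamb]; exact Order.lt_succ b
      have hbo : b < o := hblam.trans hlamo
      have hble : (fAux g c x.val b).len ≤ β := hmin b hblam
      rcases hble.lt_or_eq with hlt | heq
      · obtain ⟨ξ, ⟨a, hao, hξ1⟩, hξ2, hξ3⟩ := hcl _ hlt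
        have halam : a < lam := by
          by_contra hn
          have h4 : (fAux g c x.val lam).len ≤ (fAux g c x.val a).len :=
            fAux_len_le ho hbs g c hc x.val (not_lt.mp hn) hao
          rw [hξ1] at h4
          have h5 : ξ + 1 ≤ β := by
            rw [Ordinal.add_one_eq_succ]; exact Order.succ_le_of_lt hξ3
          exact absurd (h4.trans h5) (not_le.mpr hlamS)
        have hab : a ≤ b := by
          rw [← hlamb] at halam; exact Order.lt_succ_iff.mp halam
        have h6 : (fAux g c x.val a).len ≤ (fAux g c x.val b).len :=
          fAux_len_le ho hbs g c hc x.val hab hbo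
        rw [hξ1] at h6
        exact absurd hξ2 (not_lt.mpr (lt_of_lt_of_le (lt_add_one ξ) h6).le)
      · -- (F b).len = β with β limit : impossible
        exfalso
        have hb0 : b ≠ 0 := by
          rintro rfl
          rw [fAux_len_zero] at heq
          exact absurd heq.symm (ne_of_gt hβpos)
        obtain ⟨m, hm1, _⟩ := fAux_marker ho g c hc x.val hb0 hbo
        rw [heq] at hm1
        have hmβ : m < β := by rw [hm1]; exact lt_add_one m
        have := hβlim.succ_lt hmβ
        rw [← Ordinal.add_one_eq_succ, ← hm1] at this
        exact lt_irrefl β this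
    · -- lam limit
      have hsup : Ordinal.bsup.{u, u} lam (fun a _ => (fAux g c x.val a).len) = β := by
        refine le_antisymm (Ordinal.bsup_le fun a ha => hmin a ha) (not_lt.mp fun hn => ?_)
        obtain ⟨ξ, ⟨a, hao, hξ1⟩, hξ2, hξ3⟩ := hcl _ hn
        have h3 : ¬ a < lam := fun h =>
          absurd (Ordinal.le_bsup (fun a (_ : a < lam) => (fAux g c x.val a).len) a h)
            (not_le.mpr (by rw [hξ1]; exact hξ2.trans (lt_add_one ξ)))
        have h4 : (fAux g c x.val lam).len ≤ (fAux g c x.val a).len :=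
          fAux_len_le ho hbs g c hc x.val (not_lt.mp h3) hao
        rw [hξ1, Ordinal.add_one_eq_succ] at h4
        exact absurd (h4.trans (Order.succ_le_of_lt hξ3)) (not_le.mpr hlamS)
      exact ⟨lam, hlamo, by
        rw [fAux_limit_len ho hbs g c hc x.val hlamlim hlamo, hsup]⟩
  · -- values
    rintro i ⟨a, hao, hlen⟩
    have ha0 : a ≠ 0 := by
      rintro rfl
      rw [fAux_len_zero] at hlen
      exact (Ordinal.succ_ne_zero i) (by rw [← Ordinal.add_one_eq_succ, ← hlen])
    obtain ⟨m, hm1, hm2⟩ := fAux_marker ho g c hc x.val ha0 hao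
    have hmi : m = i := succ_cancel (by rw [← hm1, hlen])
    have hpre := h1 a hao i (by rw [hlen]; exact lt_add_one i)
    rw [← hpre, ← hmi, hm2]

end Club
/-! ### A surjection onto `v^{<v}` from the cardinal arithmetic assumption -/

section Surj
open Cardinal

theorem exists_surj (ν : Cardinal.{u}) (hreg : ν.IsRegular)
    (hpow : Cardinal.powerlt ν ν = ν) :
    ∃ g : Ordinal.{u} → SeqLT ν.ord ν.ord,
      ∀ t : SeqLT ν.ord ν.ord, ∃ β, β < ν.ord ∧ g β = t := by
  have ho : Order.IsSuccLimit ν.ord := Cardinal.isSuccLimit_ord hreg.aleph0_le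
  set o := ν.ord with hodef
  let Φ : SeqLT o o → Σ p : ↥(Set.Iio o), (↥(Set.Iio (p : Ordinal.{u})) → ↥(Set.Iio o)) :=
    fun s => ⟨⟨s.len, llt ho s⟩, fun β => ⟨s.val β, s.val_lt β β.2⟩⟩
  let Ψ : (Σ p : ↥(Set.Iio o), (↥(Set.Iio (p : Ordinal.{u})) → ↥(Set.Iio o))) →
      Ordinal.{u} → Ordinal.{u} :=
    fun z β => if h : β < (z.1 : Ordinal.{u}) then (z.2 ⟨β, h⟩ : Ordinal.{u}) else 0
  have hval : ∀ (s : SeqLT o o) (β : Ordinal.{u}), Ψ (Φ s) β = s.val β := by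
    intro s β
    by_cases hβ : β < s.len
    · exact dif_pos hβ
    · show dite _ _ _ = _
      rw [dif_neg hβ, s.val_zero β (not_lt.mp hβ)]
  have hinj : Function.Injective Φ := by
    intro s t h
    refine SeqLT.ext' (congrArg (fun z => (z.1 : Ordinal.{u})) h) fun β => ?_
    rw [← hval s β, ← hval t β, h]
  have hcard : #(SeqLT o o) ≤ #(↥(Set.Iio o)) := by
    refine (Cardinal.mk_le_of_injective hinj).trans ?_
    rw [Cardinal.mk_sigma]
    have hterm : ∀ p : ↥(Set.Iio o),
        #(↥(Set.Iio (p : Ordinal.{u})) → ↥(Set.Iio o)) ≤ Cardinal.lift.{u + 1} ν := by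
      intro p
      rw [← Cardinal.power_def, Ordinal.mk_Iio_ordinal, Ordinal.mk_Iio_ordinal,
        Cardinal.card_ord, ← Cardinal.lift_power]
      refine Cardinal.lift_le.mpr ?_
      have hplt : (p : Ordinal.{u}).card < ν := Cardinal.lt_ord.mp p.2
      calc ν ^ (p : Ordinal.{u}).card ≤ Cardinal.powerlt ν ν := Cardinal.le_powerlt ν hplt
      _ = ν := hpow
    calc (Cardinal.sum fun p : ↥(Set.Iio o) =>
          #(↥(Set.Iio (p : Ordinal.{u})) → ↥(Set.Iio o)))
        ≤ Cardinal.sum fun _ : ↥(Set.Iio o) => Cardinal.lift.{u + 1} ν :=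
          Cardinal.sum_le_sum _ _ hterm
    _ = #(↥(Set.Iio o)) * Cardinal.lift.{u + 1} ν := Cardinal.sum_const' _ _
    _ = Cardinal.lift.{u + 1} ν * Cardinal.lift.{u + 1} ν := by
          rw [Ordinal.mk_Iio_ordinal, Cardinal.card_ord]
    _ = Cardinal.lift.{u + 1} ν :=
          Cardinal.mul_eq_self (Cardinal.aleph0_le_lift.mpr hreg.aleph0_le)
    _ = #(↥(Set.Iio o)) := by rw [Ordinal.mk_Iio_ordinal, Cardinal.card_ord]
  obtain ⟨e⟩ := Cardinal.le_def _ _ |>.mp hcard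
  refine ⟨fun β => if h : ∃ t : SeqLT o o, (e t : Ordinal.{u}) = β then h.choose
    else SeqLT.empty o o, fun t => ?_⟩
  have hex : ∃ t' : SeqLT o o, (e t' : Ordinal.{u}) = (e t : Ordinal.{u}) := ⟨t, rfl⟩
  refine ⟨(e t : Ordinal.{u}), (e t).2, ?_⟩
  show dite _ _ _ = _
  rw [dif_pos hex]
  exact e.injective (Subtype.ext hex.choose_spec)

end Surj

end AlmostBaireAux
/-- For an infinite regular cardinal `ν` with `ν^{<ν} = ν`, the sets `Cl_ν` and `Ns_ν`
are almost Baire subsets of `ν^ν`. -/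
theorem statement5 (ν : Cardinal.{u}) (hreg : ν.IsRegular)
    (hpow : Cardinal.powerlt ν ν = ν) :
    AlmostBaire (ClSet ν.ord ν.ord) ∧ AlmostBaire (NsSet ν.ord ν.ord) := by
  have ho : Order.IsSuccLimit ν.ord := Cardinal.isSuccLimit_ord hreg.aleph0_le
  have hbs : ∀ (lam : Ordinal.{u}) (f : ∀ a < lam, Ordinal.{u}), lam < ν.ord →
      (∀ a ha, f a ha < ν.ord) → Ordinal.bsup.{u, u} lam f < ν.ord :=
    fun lam f hl hf => Cardinal.bsup_lt_ord_of_isRegular hreg (Cardinal.lt_ord.mp hl) hf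
  obtain ⟨g, hg⟩ := AlmostBaireAux.exists_surj ν hreg hpow
  have key : ∀ c : Ordinal.{u}, c < ν.ord →
      ∃ f : SeqLT ν.ord ν.ord → SeqLT ν.ord ν.ord, IsHom f ∧ IsDenseMap f ∧
        ∀ x y, FStarVal f x y →
          ∃ C : Set Ordinal.{u}, IsClubIn C ν.ord ∧ ∀ i ∈ C, y.val i = c := by
    intro c hc
    refine ⟨AlmostBaireAux.fHom g c, AlmostBaireAux.fHom_isHom ho hbs g c hc,
      AlmostBaireAux.fHom_isDense ho hbs g c hc hg, fun x y hxy => ?_⟩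
    refine AlmostBaireAux.club_main ho hbs g c hc x y (fun a ha => ?_) (fun β hβ => ?_)
    · have := hxy.1 a ha
      rwa [AlmostBaireAux.fHom_res g c x ha] at this
    · obtain ⟨a, ha, hlen⟩ := hxy.2 β hβ
      rw [AlmostBaireAux.fHom_res g c x ha] at hlen
      exact ⟨a, ha, hlen⟩
  constructor
  · obtain ⟨f, h1, h2, h3⟩ := key 1 (Ordinal.one_lt_of_isSuccLimit ho)
    refine ⟨f, h1, h2, Or.inl fun x y hxy => ?_⟩
    obtain ⟨C, hC, hCv⟩ := h3 x y hxy
    exact ⟨C, hC, fun i hi => by rw [hCv i hi]; exact one_ne_zero⟩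
  · obtain ⟨f, h1, h2, h3⟩ := key 0 ho.pos
    refine ⟨f, h1, h2, Or.inl fun x y hxy => ?_⟩
    obtain ⟨C, hC, hCv⟩ := h3 x y hxy
    exact ⟨C, hC, fun i hi => hCv i hi⟩

end
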